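/- For every nonnegative integer r, there exists a polynomial Q_r with integer coefficients, of degree r, such that for all positive integers n, 2^r·Σ_{k=0}^{2n} C(2n,k)·(n−k)^{2r} = Q_r(n)·2^{2n}. -/

import Mathlib

open Finset

def cc (s : ℕ) (x : ℤ) : ℤ := ∏ i ∈ range s, (x^2 - (i:ℤ)^2)
def hh (m : ℕ) (x : ℤ) : ℤ := ∏ j ∈ range m, (x - (j:ℤ))
def dd (s : ℕ) : ℤ := ∏ i ∈ range s, (2*(i:ℤ)+1)

def TT : ℕ → ℕ → ℤ
  | 0, 0 => 1
  | 0, _+1 => 0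
  | _+1, 0 => 0
  | r+1, s+1 => TT r s + ((s:ℤ)+1)^2 * TT r (s+1)

lemma cc_zero (x : ℤ) : cc 0 x = 1 := by simp [cc]
lemma cc_succ (s : ℕ) (x : ℤ) : cc (s+1) x = cc s x * (x^2 - (s:ℤ)^2) := prod_range_succ _ _

lemma hh_top (m : ℕ) (x : ℤ) : hh (m+1) x = hh m (x-1) * x := by
  rw [hh, prod_range_succ', hh]
  push_cast
  congr 1
  · exact prod_congr rfl (fun i _ => by ring)
  · ring

lemma hh_bot (m : ℕ) (x : ℤ) : hh (m+1) x = hh m x * (x - (m:ℤ)) := prod_range_succ _ _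

lemma cc_hh (s : ℕ) (x : ℤ) : cc (s+1) x = x * hh (2*s+1) (x + s) := by
  induction s with
  | zero => simp [cc, hh]; ring
  | succ s ih =>
    have hr : hh (2*(s+1)+1) (x + ((s+1:ℕ):ℤ)) = hh (2*s+1) (x+s) * ((x-(s:ℤ)-1)*(x+s+1)) := by
      have e1 : 2*(s+1)+1 = (2*s+1+1)+1 := by ring
      rw [e1, hh_top, hh_bot]
      have e2 : (x + ((s+1:ℕ):ℤ) - 1) = x + s := by push_cast; ring
      rw [e2]
      push_cast
      ring
    rw [cc_succ, ih, hr]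
    push_cast
    ring

lemma deltaAll (s : ℕ) (x : ℤ) :
    cc (s+1) (x+1) + cc (s+1) (x-1) = 2 * cc (s+1) x + (2*(s:ℤ)+2)*(2*(s:ℤ)+1) * cc s x := by
  cases s with
  | zero => simp [cc, prod_range_succ]; ring
  | succ s =>
    have h1 : hh (2*(s+1)+1) ((x+1) + ((s+1:ℕ):ℤ)) =
        hh (2*s+1) (x+s) * ((x+(s:ℤ)+1)*(x+(s:ℤ)+2)) := by
      have e1 : 2*(s+1)+1 = (2*s+1+1)+1 := by ring
      rw [e1, hh_top]
      have e2 : ((x+1) + ((s+1:ℕ):ℤ) - 1) = x + s + 1 := by push_cast; ring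
      rw [e2, hh_top]
      have e3 : (x + (s:ℤ) + 1 - 1) = x + s := by ring
      rw [e3]; push_cast; ring
    have h2 : hh (2*(s+1)+1) ((x-1) + ((s+1:ℕ):ℤ)) =
        hh (2*s+1) (x+s) * ((x-(s:ℤ)-1)*(x-(s:ℤ)-2)) := by
      have e1 : 2*(s+1)+1 = (2*s+1+1)+1 := by ring
      rw [e1, hh_bot, hh_bot]
      have e2 : ((x-1) + ((s+1:ℕ):ℤ)) = x + s := by push_cast; ring
      rw [e2]; push_cast; ring
    have h3 : hh (2*(s+1)+1) (x + ((s+1:ℕ):ℤ)) =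
        hh (2*s+1) (x+s) * ((x-(s:ℤ)-1)*(x+(s:ℤ)+1)) := by
      have e1 : 2*(s+1)+1 = (2*s+1+1)+1 := by ring
      rw [e1, hh_top]
      have e2 : (x + ((s+1:ℕ):ℤ) - 1) = x + s := by push_cast; ring
      rw [e2, hh_bot]
      push_cast; ring
    rw [cc_hh (s+1) (x+1), cc_hh (s+1) (x-1), cc_hh (s+1) x, cc_hh s x, h1, h2, h3]
    push_cast
    ring

lemma pascal_sum (m : ℕ) (f : ℕ → ℤ) :
    ∑ k ∈ range (m+2), ((m+1).choose k : ℤ) * f k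
      = ∑ k ∈ range (m+1), (m.choose k : ℤ) * (f k + f (k+1)) := by
  have h1 : ∑ k ∈ range (m+2), ((m+1).choose k : ℤ) * f k
      = (∑ k ∈ range (m+1), ((m+1).choose (k+1) : ℤ) * f (k+1)) + ((m+1).choose 0 : ℤ) * f 0 :=
    sum_range_succ' _ _
  have h2 : ∑ k ∈ range (m+2), (m.choose k : ℤ) * f k
      = (∑ k ∈ range (m+1), (m.choose (k+1) : ℤ) * f (k+1)) + (m.choose 0 : ℤ) * f 0 :=
    sum_range_succ' _ _
  have h3 : ∑ k ∈ range (m+2), (m.choose k : ℤ) * f k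
      = ∑ k ∈ range (m+1), (m.choose k : ℤ) * f k := by
    rw [sum_range_succ, Nat.choose_succ_self]; simp
  have h4 : ∀ k, (((m+1).choose (k+1) : ℤ)) * f (k+1)
      = (m.choose k : ℤ) * f (k+1) + (m.choose (k+1) : ℤ) * f (k+1) := by
    intro k
    rw [Nat.choose_succ_succ]
    push_cast; ring
  rw [h1]
  simp only [h4, sum_add_distrib]
  have h5 : ∑ k ∈ range (m+1), (m.choose k : ℤ) * (f k + f (k+1))
      = (∑ k ∈ range (m+1), (m.choose k : ℤ) * f k)
        + ∑ k ∈ range (m+1), (m.choose k : ℤ) * f (k+1) := by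
    rw [← sum_add_distrib]
    exact sum_congr rfl (fun k _ => by ring)
  rw [h5, ← h3, h2]
  simp [Nat.choose_zero_right]
  ring

lemma TT_lt : ∀ r s : ℕ, r < s → TT r s = 0 := by
  intro r
  induction r with
  | zero => intro s hs; match s, hs with | s+1, _ => rfl
  | succ r ih =>
    intro s hs
    match s, hs with
    | s+1, hs =>
      have h1 : r < s := by omega
      rw [TT, ih s h1, ih (s+1) (by omega)]
      ring

lemma TT_diag (r : ℕ) : TT r r = 1 := by
  induction r with
  | zero => rfl
  | succ r ih => rw [TT, ih, TT_lt r (r+1) (by omega)]; ring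

lemma lemA (r : ℕ) (x : ℤ) : x^(2*r) = ∑ s ∈ range (r+1), TT r s * cc s x := by
  induction r with
  | zero => simp [TT, cc]
  | succ r ih =>
    have step : ∀ s, cc s x * x^2 = cc (s+1) x + (s:ℤ)^2 * cc s x := fun s => by
      rw [cc_succ]; ring
    have c1 : x^(2*(r+1)) = (∑ s ∈ range (r+1), TT r s * cc s x) * x^2 := by
      rw [← ih, ← pow_add]; ring_nf
    rw [c1]
    have c2 : (∑ s ∈ range (r+1), TT r s * cc s x) * x^2
        = (∑ s ∈ range (r+1), TT r s * cc (s+1) x)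
          + ∑ s ∈ range (r+1), (s:ℤ)^2 * TT r s * cc s x := by
      rw [sum_mul, ← sum_add_distrib]
      exact sum_congr rfl (fun s _ => by rw [mul_assoc, step s]; ring)
    rw [c2]
    have c3 : ∑ s ∈ range (r+1+1), TT (r+1) s * cc s x
        = (∑ s ∈ range (r+1), (TT r s + ((s:ℤ)+1)^2 * TT r (s+1)) * cc (s+1) x) + 0 := by
      rw [sum_range_succ']
      congr 1
    rw [c3, add_zero]
    have c4 : ∑ s ∈ range (r+1), (s:ℤ)^2 * TT r s * cc s x
        = ∑ s ∈ range (r+1), ((s:ℤ)+1)^2 * TT r (s+1) * cc (s+1) x := by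
      rw [sum_range_succ' (fun s => (s:ℤ)^2 * TT r s * cc s x),
          sum_range_succ (fun s => ((s:ℤ)+1)^2 * TT r (s+1) * cc (s+1) x)]
      rw [TT_lt r (r+1) (by omega)]
      push_cast
      simp
    rw [c4, ← sum_add_distrib]
    exact sum_congr rfl (fun s _ => by ring)

lemma lemB (n : ℕ) : ∀ s : ℕ,
    (2:ℤ)^s * ∑ k ∈ range (2*n+1), ((2*n).choose k : ℤ) * cc s ((n:ℤ) - k)
      = dd s * hh s (n:ℤ) * 2^(2*n) := by
  induction n with
  | zero =>
    intro s
    cases s with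
    | zero => simp [cc, dd, hh]
    | succ s =>
      have h1 : cc (s+1) (0:ℤ) = 0 := by
        rw [cc_hh]; simp
      have h2 : hh (s+1) (0:ℤ) = 0 := by
        rw [hh_top]; ring
      simp [h1, h2]
  | succ n ih =>
    intro s
    have hrange : 2*(n+1)+1 = (2*n+1)+2 := by ring
    have hcast : ∀ k : ℕ, (((n+1:ℕ)):ℤ) - k = ((n:ℤ) - k) + 1 := by
      intro k; push_cast; ring
    cases s with
    | zero =>
      have hs : ∑ k ∈ range (2*(n+1)+1), ((2*(n+1)).choose k : ℤ) = 2^(2*(n+1)) := by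
        exact_mod_cast Nat.sum_range_choose (2*(n+1))
      simp only [cc_zero, mul_one]
      rw [hs]
      simp [dd, hh]
    | succ s =>
      -- apply Pascal twice
      have p1 : ∑ k ∈ range ((2*n+1)+2), (((2*n+1)+1).choose k : ℤ) * cc (s+1) (((n+1:ℕ):ℤ) - k)
          = ∑ k ∈ range ((2*n+1)+1), ((2*n+1).choose k : ℤ) *
              (cc (s+1) (((n+1:ℕ):ℤ) - k) + cc (s+1) (((n+1:ℕ):ℤ) - (k+1:ℕ))) :=
        pascal_sum (2*n+1) (fun k => cc (s+1) (((n+1:ℕ):ℤ) - k))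
      have p2 : ∑ k ∈ range ((2*n)+2), (((2*n)+1).choose k : ℤ) *
              (cc (s+1) (((n+1:ℕ):ℤ) - k) + cc (s+1) (((n+1:ℕ):ℤ) - (k+1:ℕ)))
          = ∑ k ∈ range ((2*n)+1), ((2*n).choose k : ℤ) *
              ((cc (s+1) (((n+1:ℕ):ℤ) - k) + cc (s+1) (((n+1:ℕ):ℤ) - (k+1:ℕ)))
                + (cc (s+1) (((n+1:ℕ):ℤ) - (k+1:ℕ)) + cc (s+1) (((n+1:ℕ):ℤ) - (k+2:ℕ)))) :=
        pascal_sum (2*n) (fun k => cc (s+1) (((n+1:ℕ):ℤ) - k) + cc (s+1) (((n+1:ℕ):ℤ) - (k+1:ℕ)))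
      have key : ∀ k : ℕ,
          (cc (s+1) (((n+1:ℕ):ℤ) - k) + cc (s+1) (((n+1:ℕ):ℤ) - (k+1:ℕ)))
            + (cc (s+1) (((n+1:ℕ):ℤ) - (k+1:ℕ)) + cc (s+1) (((n+1:ℕ):ℤ) - (k+2:ℕ)))
          = 4 * cc (s+1) ((n:ℤ) - k) + (2*(s:ℤ)+2)*(2*(s:ℤ)+1) * cc s ((n:ℤ) - k) := by
        intro k
        have e1 : (((n+1:ℕ):ℤ) - k) = ((n:ℤ) - k) + 1 := by push_cast; ring
        have e2 : (((n+1:ℕ):ℤ) - (k+1:ℕ)) = ((n:ℤ) - k) := by push_cast; ring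
        have e3 : (((n+1:ℕ):ℤ) - (k+2:ℕ)) = ((n:ℤ) - k) - 1 := by push_cast; ring
        rw [e1, e2, e3]
        have := deltaAll s ((n:ℤ) - k)
        linarith [this]
      have hid : 2*(n+1) = (2*n+1)+1 := by ring
      rw [hrange, hid, p1]
      rw [show (2*n+1)+1 = (2*n)+2 from rfl] at *
      rw [p2]
      have expand : ∑ k ∈ range ((2*n)+1), ((2*n).choose k : ℤ) *
              ((cc (s+1) (((n+1:ℕ):ℤ) - k) + cc (s+1) (((n+1:ℕ):ℤ) - (k+1:ℕ)))
                + (cc (s+1) (((n+1:ℕ):ℤ) - (k+1:ℕ)) + cc (s+1) (((n+1:ℕ):ℤ) - (k+2:ℕ))))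
          = 4 * (∑ k ∈ range ((2*n)+1), ((2*n).choose k : ℤ) * cc (s+1) ((n:ℤ) - k))
            + (2*(s:ℤ)+2)*(2*(s:ℤ)+1) * ∑ k ∈ range ((2*n)+1), ((2*n).choose k : ℤ) * cc s ((n:ℤ) - k) := by
        rw [mul_sum, mul_sum, ← sum_add_distrib]
        refine sum_congr rfl (fun k _ => ?_)
        rw [key k]
        ring
      rw [expand]
      have ih1 := ih (s+1)
      have ih2 := ih s
      -- goal: 2^(s+1) * (4 * S1 + c * S0) = dd (s+1) * hh (s+1) (n+1) * 2^(2*(n+1))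
      have hdd : dd (s+1) = dd s * (2*(s:ℤ)+1) := prod_range_succ _ _
      have hhh1 : hh (s+1) ((n+1:ℕ):ℤ) = hh s (n:ℤ) * ((n:ℤ)+1) := by
        rw [hh_top]
        have : (((n+1:ℕ):ℤ) - 1) = (n:ℤ) := by push_cast; ring
        rw [this]
        push_cast; ring
      have hhh2 : hh (s+1) ((n:ℕ):ℤ) = hh s (n:ℤ) * ((n:ℤ) - s) := hh_bot _ _
      rw [hdd, hhh1]
      have hpow : (2:ℤ)^(2*n+2) = 4 * 2^(2*n) := by
        rw [pow_add]; ring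
      rw [hpow]
      rw [hhh2, hdd] at ih1
      -- linear combination of ih1 and ih2
      linear_combination 4 * ih1 + (2*(2*(s:ℤ)+2)*(2*(s:ℤ)+1)) * ih2

open Polynomial in
noncomputable def Qpoly (r : ℕ) : Polynomial ℤ :=
  ∑ s ∈ range (r+1), C (TT r s * 2^(r-s) * dd s) * ∏ i ∈ range s, (X - C (i:ℤ))

open Polynomial in
lemma Qpoly_eval (r : ℕ) (x : ℤ) :
    (Qpoly r).eval x = ∑ s ∈ range (r+1), TT r s * 2^(r-s) * dd s * hh s x := by
  rw [Qpoly, eval_finset_sum]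
  refine sum_congr rfl (fun s _ => ?_)
  rw [eval_mul, eval_C, eval_prod, hh]
  congr 1
  exact prod_congr rfl (fun i _ => by simp)

lemma dd_pos (s : ℕ) : 0 < dd s := by
  rw [dd]
  exact prod_pos (fun i _ => by positivity)

open Polynomial in
lemma fall_monic (s : ℕ) : (∏ i ∈ range s, (X - C (i:ℤ))).Monic :=
  monic_prod_of_monic _ _ (fun i _ => monic_X_sub_C _)

open Polynomial in
lemma fall_degree (s : ℕ) : (∏ i ∈ range s, (X - C (i:ℤ))).degree = (s : WithBot ℕ) := by
  rw [degree_prod]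
  have h : ∀ i ∈ range s, ((X : Polynomial ℤ) - C (i:ℤ)).degree = (1 : WithBot ℕ) :=
    fun i _ => degree_X_sub_C _
  rw [Finset.sum_congr rfl h]
  simp

open Polynomial in
lemma Qpoly_degree (r : ℕ) : (Qpoly r).degree = r := by
  rw [Qpoly, sum_range_succ]
  have hne : TT r r * 2^(r-r) * dd r ≠ 0 := by
    rw [TT_diag, Nat.sub_self]
    simpa using (dd_pos r).ne'
  have hdeg : (C (TT r r * 2^(r-r) * dd r) * ∏ i ∈ range r, (X - C (i:ℤ))).degree = r := by
    rw [degree_mul, degree_C hne, fall_degree, zero_add]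
  rw [← hdeg]
  apply degree_add_eq_right_of_degree_lt
  rw [hdeg]
  apply lt_of_le_of_lt (degree_sum_le _ _)
  rw [Finset.sup_lt_iff (by exact_mod_cast WithBot.bot_lt_coe r)]
  intro s hs
  apply lt_of_le_of_lt (degree_mul_le _ _)
  have h1 : (C (TT r s * 2^(r-s) * dd s)).degree ≤ 0 := degree_C_le
  have h2 : (∏ i ∈ range s, (X - C (i:ℤ))).degree = (s : WithBot ℕ) := fall_degree s
  have hsr : s < r := mem_range.mp hs
  calc (C (TT r s * 2^(r-s) * dd s)).degree + (∏ i ∈ range s, (X - C (i:ℤ))).degree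
      ≤ 0 + (s : WithBot ℕ) := add_le_add h1 (le_of_eq h2)
    _ = (s : WithBot ℕ) := zero_add _
    _ < r := by exact_mod_cast hsr

theorem stmt_12 (r : ℕ) :
    ∃ Q : Polynomial ℤ, Q.degree = r ∧
      ∀ n : ℕ, 0 < n →
        2 ^ r * ∑ k ∈ Finset.range (2 * n + 1),
            (Nat.choose (2 * n) k : ℤ) * ((n : ℤ) - k) ^ (2 * r) =
          Q.eval (n : ℤ) * 2 ^ (2 * n) := by
  refine ⟨Qpoly r, Qpoly_degree r, fun n _ => ?_⟩
  rw [Qpoly_eval]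
  have step1 : ∑ k ∈ range (2*n+1), ((2*n).choose k : ℤ) * ((n:ℤ) - k)^(2*r)
      = ∑ s ∈ range (r+1), TT r s * ∑ k ∈ range (2*n+1), ((2*n).choose k : ℤ) * cc s ((n:ℤ) - k) := by
    simp only [lemA r, Finset.mul_sum]
    rw [sum_comm]
    refine sum_congr rfl (fun s _ => ?_)
    exact sum_congr rfl (fun k _ => by ring)
  rw [step1, Finset.mul_sum, sum_mul]
  refine sum_congr rfl (fun s hs => ?_)
  have hsr : s ≤ r := by have := mem_range.mp hs; omega
  have h2 : (2:ℤ)^(r-s) * 2^s = 2^r := by rw [← pow_add, Nat.sub_add_cancel hsr]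
  have key := lemB n s
  calc 2^r * (TT r s * ∑ k ∈ range (2*n+1), ((2*n).choose k : ℤ) * cc s ((n:ℤ) - k))
      = TT r s * 2^(r-s) * ((2:ℤ)^s * ∑ k ∈ range (2*n+1), ((2*n).choose k : ℤ) * cc s ((n:ℤ) - k)) := by
        rw [← h2]; ring
    _ = TT r s * 2^(r-s) * (dd s * hh s (n:ℤ) * 2^(2*n)) := by rw [key]
    _ = TT r s * 2^(r-s) * dd s * hh s (n:ℤ) * 2^(2*n) := by ring
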